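/- arXiv:2111.10244 — 3 statements merged into one kernel-verified Lean document; each statement's English description precedes it below -/
import Mathlib

section
/- If an N-partite pure state |ψ⟩ can be converted to |φ⟩ by LOSR only when there exists a state |ζ⟩ with, for every bipartition β, the sorted squared Schmidt vector of ψ equal to the sorted tensor product of those of φ and ζ, then for θ ≠ φ in (0, π/4] the generalized GHZ states |GHZ_N^θ⟩ = cos θ |0…0⟩ + sin θ |1…1⟩ and |GHZ_N^φ⟩ are not LOSR-convertible to one another in either direction. -/
open Real

/-- The multiset of entries of the tensor product of the squared-Schmidt vector
`(cos² φ, sin² φ)` with an auxiliary vector `ζ`. -/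
noncomputable def schmidtTensor (φ : ℝ) {n : ℕ} (ζ : Fin n → ℝ) : Multiset ℝ :=
  (Finset.univ.val.map fun i => cos φ ^ 2 * ζ i) +
  (Finset.univ.val.map fun i => sin φ ^ 2 * ζ i)

private lemma trig_facts {x : ℝ} (hx : x ∈ Set.Ioc 0 (π / 4)) :
    0 < sin x ∧ 0 < cos x ∧ sin x ^ 2 ≤ cos x ^ 2 := by
  obtain ⟨h0, h4⟩ := hx
  have hpi := Real.pi_pos
  have hsin : 0 < sin x := Real.sin_pos_of_pos_of_lt_pi h0 (by linarith)
  have hcos : 0 < cos x := Real.cos_pos_of_mem_Ioo ⟨by linarith, by linarith⟩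
  have h2 : 0 ≤ cos (2 * x) := Real.cos_nonneg_of_mem_Icc ⟨by linarith, by linarith⟩
  have h3 := Real.cos_two_mul x
  have h4' := Real.sin_sq_add_cos_sq x
  exact ⟨hsin, hcos, by linarith⟩

private lemma ghz_key (θ φ : ℝ) (hθ : θ ∈ Set.Ioc 0 (π / 4)) (hφ : φ ∈ Set.Ioc 0 (π / 4))
    (hne : θ ≠ φ) {n : ℕ} (ζ : Fin n → ℝ) (hζ : ∀ i, 0 ≤ ζ i) (hsum : ∑ i, ζ i = 1)
    (heq : Multiset.filter (· ≠ 0) (schmidtTensor φ ζ) =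
      Multiset.filter (· ≠ 0) ({cos θ ^ 2, sin θ ^ 2} : Multiset ℝ)) : False := by
  obtain ⟨hsθ, hcθ, hleθ⟩ := trig_facts hθ
  obtain ⟨hsφ, hcφ, hleφ⟩ := trig_facts hφ
  have hcθ2 : cos θ ^ 2 ≠ 0 := by positivity
  have hsθ2 : sin θ ^ 2 ≠ 0 := by positivity
  have hcφ2 : (0:ℝ) < cos φ ^ 2 := by positivity
  have hsφ2 : (0:ℝ) < sin φ ^ 2 := by positivity
  -- RHS is just the pair
  have hrhs : Multiset.filter (· ≠ 0) ({cos θ ^ 2, sin θ ^ 2} : Multiset ℝ)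
      = {cos θ ^ 2, sin θ ^ 2} := by
    simp [Multiset.filter_cons, Multiset.filter_singleton, hcθ2, hsθ2]
  -- LHS in terms of the support of ζ
  set S : Multiset (Fin n) := Multiset.filter (fun i => ζ i ≠ 0) Finset.univ.val with hS
  have hlhs : Multiset.filter (· ≠ 0) (schmidtTensor φ ζ)
      = S.map (fun i => cos φ ^ 2 * ζ i) + S.map (fun i => sin φ ^ 2 * ζ i) := by
    rw [schmidtTensor, Multiset.filter_add, Multiset.filter_map, Multiset.filter_map]
    congr 1
    · congr 1
      refine Multiset.filter_congr fun i _ => ?_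
      simp [Function.comp, mul_ne_zero_iff, ne_of_gt hcφ2]
    · congr 1
      refine Multiset.filter_congr fun i _ => ?_
      simp [Function.comp, mul_ne_zero_iff, ne_of_gt hsφ2]
  rw [hlhs, hrhs] at heq
  -- cardinality forces the support to be a singleton
  have hcard : Multiset.card S = 1 := by
    have := congrArg Multiset.card heq
    simp at this
    omega
  obtain ⟨i₀, hi₀⟩ := Multiset.card_eq_one.mp hcard
  -- the single nonzero ζ value is 1
  have hfin : (Finset.univ.filter (fun i => ζ i ≠ 0)).val = ({i₀} : Multiset (Fin n)) := by
    rw [Finset.filter_val]; exact hS ▸ hi₀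
  have hζ1 : ζ i₀ = 1 := by
    have h1 : ∑ i ∈ Finset.univ.filter (fun i => ζ i ≠ 0), ζ i = ∑ i, ζ i :=
      Finset.sum_filter_ne_zero _
    have h2 : ∑ i ∈ Finset.univ.filter (fun i => ζ i ≠ 0), ζ i = ζ i₀ := by
      rw [Finset.sum, hfin]; simp
    rw [h2, hsum] at h1
    exact h1
  rw [hi₀] at heq
  simp [hζ1] at heq
  -- pair equality
  have hmem : cos φ ^ 2 = cos θ ^ 2 ∨ cos φ ^ 2 = sin θ ^ 2 := by
    have hm : cos φ ^ 2 ∈ cos θ ^ 2 ::ₘ ({sin θ ^ 2} : Multiset ℝ) := by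
      rw [← heq]; simp
    simpa using hm
  have p1 := Real.sin_sq_add_cos_sq θ
  have p2 := Real.sin_sq_add_cos_sq φ
  have hccos : cos φ ^ 2 = cos θ ^ 2 := by
    rcases hmem with h | h
    · exact h
    · linarith
  have hcc : cos φ = cos θ := by nlinarith
  have hpi := Real.pi_pos
  exact hne (Real.injOn_cos ⟨hφ.1.le, by linarith [hφ.2]⟩ ⟨hθ.1.le, by linarith [hθ.2]⟩ hcc).symm

theorem ghz_states_losr_incomparable
    (conv : ℝ → ℝ → Prop)
    -- the assumed necessary criterion for LOSR convertibility of the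
    -- generalized GHZ states |GHZ_N^θ⟩ → |GHZ_N^φ⟩ (for every bipartition the
    -- Schmidt vector is (cos²θ, sin²θ), so the criterion reduces to this):
    (hcrit : ∀ θ φ : ℝ, conv θ φ →
      ∃ (n : ℕ) (ζ : Fin n → ℝ), (∀ i, 0 ≤ ζ i) ∧ (∑ i, ζ i = 1) ∧
        Multiset.filter (· ≠ 0) (schmidtTensor φ ζ) =
          Multiset.filter (· ≠ 0) ({cos θ ^ 2, sin θ ^ 2} : Multiset ℝ))
    (θ φ : ℝ) (hθ : θ ∈ Set.Ioc 0 (π / 4)) (hφ : φ ∈ Set.Ioc 0 (π / 4))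
    (hne : θ ≠ φ) :
    ¬ conv θ φ ∧ ¬ conv φ θ := by
  constructor
  · intro h
    obtain ⟨n, ζ, h1, h2, h3⟩ := hcrit θ φ h
    exact ghz_key θ φ hθ hφ hne ζ h1 h2 h3
  · intro h
    obtain ⟨n, ζ, h1, h2, h3⟩ := hcrit φ θ h
    exact ghz_key φ θ hφ hθ hne.symm ζ h1 h2 h3
end

section
/- Applying an LOSR transformation to an LOSR-free assemblage yields an LOSR-free assemblage: if σ_{a|x} = Σ_λ p(λ) p(a|x,λ) ρ_λ is free and σ'_{a'|x'} = Σ_{μ} Σ_{a,x} p(μ) p(a',x|x',a,μ) p(a|x) E_μ(ρ_{a|x}) with each p(a',x|x',a,μ) a valid non-retrocausal comb and each E_μ a quantum channel, then σ'_{a'|x'} admits a decomposition Σ_ν q(ν) q(a'|x',ν) ω_ν with q a distribution, q(·|x',ν) conditional distributions, and ω_ν density matrices. -/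
open Matrix ComplexOrder

lemma sum_rot3 {α β γ N : Type*} [Fintype α] [Fintype β] [Fintype γ]
    [AddCommMonoid N] (f : α → β → γ → N) :
    (∑ a, ∑ b, ∑ c, f a b c) = ∑ c, ∑ a, ∑ b, f a b c :=
  calc (∑ a, ∑ b, ∑ c, f a b c) = ∑ a, ∑ c, ∑ b, f a b c :=
        Finset.sum_congr rfl fun _ _ => Finset.sum_comm
    _ = ∑ c, ∑ a, ∑ b, f a b c := Finset.sum_comm

/-- A bipartite assemblage `σ a x` is LOSR-free if
`σ_{a|x} = Σ_λ p(λ) p(a|x,λ) ρ_λ`. -/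
def IsLOSRFree {A X : Type} [Fintype A] [Fintype X] {d : ℕ}
    (σ : A → X → Matrix (Fin d) (Fin d) ℂ) : Prop :=
  ∃ (Λ : Type) (_ : Fintype Λ) (p : Λ → ℝ) (q : A → X → Λ → ℝ)
    (ρ : Λ → Matrix (Fin d) (Fin d) ℂ),
    (∀ l, 0 ≤ p l) ∧ (∑ l, p l = 1) ∧
    (∀ a x l, 0 ≤ q a x l) ∧ (∀ x l, ∑ a, q a x l = 1) ∧
    (∀ l, (ρ l).PosSemidef ∧ (ρ l).trace = 1) ∧
    (∀ a x, σ a x = ∑ l, (p l * q a x l) • ρ l)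

theorem losr_transformation_preserves_free
    {A X A' X' M : Type} [Fintype A] [Fintype X] [Fintype A'] [Fintype X'] [Fintype M]
    {d : ℕ}
    (σ : A → X → Matrix (Fin d) (Fin d) ℂ) (hσfree : IsLOSRFree σ)
    -- shared randomness
    (pM : M → ℝ) (hpM : ∀ m, 0 ≤ pM m) (hpMsum : ∑ m, pM m = 1)
    -- Alice's comb: pre-processing `pre x x' m` and post-processing `post a' a x' m`
    (pre : X → X' → M → ℝ) (post : A' → A → X' → M → ℝ)
    (hpre : ∀ x x' m, 0 ≤ pre x x' m) (hpresum : ∀ x' m, ∑ x, pre x x' m = 1)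
    (hpost : ∀ a' a x' m, 0 ≤ post a' a x' m) (hpostsum : ∀ a x' m, ∑ a', post a' a x' m = 1)
    -- the non-retrocausal comb `p(a',x|x',a,μ) = p(a'|a,x',μ) p(x|x',μ)`
    (comb : A' → X → X' → A → M → ℝ)
    (hcomb : ∀ a' x x' a m, comb a' x x' a m = post a' a x' m * pre x x' m)
    -- Bob's local channels: linear, positivity-preserving and trace-preserving
    (E : M → Matrix (Fin d) (Fin d) ℂ →ₗ[ℂ] Matrix (Fin d) (Fin d) ℂ)
    (hEpos : ∀ m (ρ : Matrix (Fin d) (Fin d) ℂ), ρ.PosSemidef → (E m ρ).PosSemidef)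
    (hEtr : ∀ m (ρ : Matrix (Fin d) (Fin d) ℂ), (E m ρ).trace = ρ.trace)
    -- the transformed assemblage
    (σ' : A' → X' → Matrix (Fin d) (Fin d) ℂ)
    (hσ' : ∀ a' x', σ' a' x' =
      ∑ m, ∑ a, ∑ x, (pM m * comb a' x x' a m) • E m (σ a x)) :
    IsLOSRFree σ' := by
  obtain ⟨Λ, _, p, q, ρ, hp, hpsum, hq, hqsum, hρ, hσ⟩ := hσfree
  refine ⟨M × Λ, inferInstance, fun ml => pM ml.1 * p ml.2,
    fun a' x' ml => ∑ a, ∑ x, post a' a x' ml.1 * pre x x' ml.1 * q a x ml.2,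
    fun ml => E ml.1 (ρ ml.2), fun ml => mul_nonneg (hpM ml.1) (hp ml.2), ?_, ?_, ?_, ?_, ?_⟩
  · rw [Fintype.sum_prod_type]
    simp [← Finset.mul_sum, hpsum, hpMsum]
  · intro a' x' ml
    refine Finset.sum_nonneg fun a _ => Finset.sum_nonneg fun x _ => ?_
    exact mul_nonneg (mul_nonneg (hpost _ _ _ _) (hpre _ _ _)) (hq _ _ _)
  · intro x' ml
    rw [Finset.sum_comm]
    have : ∀ a ∈ (Finset.univ : Finset A),
        ∑ a', ∑ x, post a' a x' ml.1 * pre x x' ml.1 * q a x ml.2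
        = ∑ x, pre x x' ml.1 * q a x ml.2 := by
      intro a _
      rw [Finset.sum_comm]
      refine Finset.sum_congr rfl fun x _ => ?_
      rw [← Finset.sum_mul, ← Finset.sum_mul, hpostsum, one_mul]
    rw [Finset.sum_congr rfl this, Finset.sum_comm]
    calc ∑ x, ∑ a, pre x x' ml.1 * q a x ml.2
        = ∑ x, pre x x' ml.1 * ∑ a, q a x ml.2 := by
          refine Finset.sum_congr rfl fun x _ => ?_; rw [Finset.mul_sum]
      _ = 1 := by simp [hqsum, hpresum]
  · intro ml
    exact ⟨hEpos _ _ (hρ ml.2).1, by rw [hEtr]; exact (hρ ml.2).2⟩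
  · intro a' x'
    rw [hσ', Fintype.sum_prod_type]
    refine Finset.sum_congr rfl fun m _ => ?_
    simp only [hcomb, hσ, map_sum, LinearMap.map_smul_of_tower, Finset.smul_sum,
      Finset.mul_sum, Finset.sum_smul, smul_smul]
    rw [sum_rot3]
    refine Finset.sum_congr rfl fun l _ => Finset.sum_congr rfl fun a _ =>
      Finset.sum_congr rfl fun x _ => ?_
    ring_nf
end

section
/- Every conditional probability distribution p(a', x | x', a, λ) satisfying the no-retrocausation factorization p(a',x|x',a,λ) = p(a'|a,x',λ)·p(x|x',λ) over finite sets can be written as a convex combination Σ_{λ̃} q(λ̃) D(a'|a,x',λ̃) D(x|x',λ̃) of products of deterministic conditional distributions. -/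
open Finset

lemma sum_fun_prod {I V : Type} [Fintype I] [DecidableEq I] [Fintype V] [DecidableEq V]
    (p : I → V → ℝ) :
    ∑ f : I → V, ∏ i, p i (f i) = ∏ i, ∑ v, p i v := by
  rw [Finset.prod_univ_sum]
  rw [Fintype.piFinset_univ]

lemma sum_fun_det {I V : Type} [Fintype I] [DecidableEq I] [Fintype V] [DecidableEq V]
    (p : I → V → ℝ) (hp : ∀ i, ∑ v, p i v = 1) (i0 : I) (v0 : V) :
    ∑ f : I → V, (∏ i, p i (f i)) * (if v0 = f i0 then 1 else 0) = p i0 v0 := by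
  have key : ∀ f : I → V,
      (∏ i, p i (f i)) * (if v0 = f i0 then 1 else 0)
        = ∏ i, (fun i v => if i = i0 then (if v0 = v then p i v else 0) else p i v) i (f i) := by
    intro f
    simp only
    rw [← Finset.mul_prod_erase Finset.univ (fun i => p i (f i)) (Finset.mem_univ i0),
        ← Finset.mul_prod_erase Finset.univ
          (fun i => if i = i0 then (if v0 = f i then p i (f i) else 0) else p i (f i))
          (Finset.mem_univ i0)]
    rw [Finset.prod_congr rfl (fun i hi => if_neg (Finset.ne_of_mem_erase hi))]
    by_cases h : v0 = f i0 <;> simp [h]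
  simp_rw [key]
  rw [sum_fun_prod (fun i v => if i = i0 then (if v0 = v then p i v else 0) else p i v)]
  rw [← Finset.mul_prod_erase Finset.univ _ (Finset.mem_univ i0)]
  have h2 : ∏ i ∈ Finset.univ.erase i0,
      (∑ v, if i = i0 then (if v0 = v then p i v else 0) else p i v) = 1 :=
    Finset.prod_eq_one (fun i hi => by
      rw [Finset.sum_congr rfl (fun v _ => if_neg (Finset.ne_of_mem_erase hi))]
      exact hp i)
  rw [h2]
  simp

theorem fine_decomposition_of_comb
    {A A' X X' : Type} [Fintype A] [Fintype A'] [Fintype X] [Fintype X']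
    [DecidableEq A] [DecidableEq A'] [DecidableEq X] [DecidableEq X']
    (P : A' → X → X' → A → ℝ)
    (q : A' → A → X' → ℝ) (r : X → X' → ℝ)
    (hq : ∀ a' a x', 0 ≤ q a' a x') (hqsum : ∀ a x', ∑ a', q a' a x' = 1)
    (hr : ∀ x x', 0 ≤ r x x') (hrsum : ∀ x', ∑ x, r x x' = 1)
    (hfact : ∀ a' x x' a, P a' x x' a = q a' a x' * r x x') :
    ∃ (Λ : Type) (_ : Fintype Λ) (w : Λ → ℝ)
      (f : Λ → A → X' → A') (g : Λ → X' → X),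
      (∀ l, 0 ≤ w l) ∧ (∑ l, w l = 1) ∧
      (∀ a' x x' a, P a' x x' a =
        ∑ l, w l * (if a' = f l a x' then 1 else 0) * (if x = g l x' then 1 else 0)) := by
  classical
  refine ⟨((A × X') → A') × (X' → X), inferInstance,
    fun l => (∏ i : A × X', q (l.1 i) i.1 i.2) * (∏ x' : X', r (l.2 x') x'),
    fun l a x' => l.1 (a, x'), fun l x' => l.2 x', ?_, ?_, ?_⟩
  · intro l
    exact mul_nonneg (Finset.prod_nonneg fun i _ => hq _ _ _)
      (Finset.prod_nonneg fun x' _ => hr _ _)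
  · rw [Fintype.sum_prod_type]
    dsimp only
    rw [← Finset.sum_mul_sum]
    rw [sum_fun_prod (fun (i : A × X') v => q v i.1 i.2),
        sum_fun_prod (fun x' v => r v x')]
    simp [hqsum, hrsum]
  · intro a' x x' a
    rw [hfact, Fintype.sum_prod_type]
    have : ∀ fg : ((A × X') → A') × (X' → X), True := fun _ => trivial
    calc q a' a x' * r x x'
        = (∑ f : (A × X') → A', (∏ i : A × X', q (f i) i.1 i.2) *
            (if a' = f (a, x') then 1 else 0)) *
          (∑ g : X' → X, (∏ y : X', r (g y) y) * (if x = g x' then 1 else 0)) := by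
          rw [sum_fun_det (fun (i : A × X') v => q v i.1 i.2)
                (fun i => hqsum i.1 i.2) (a, x') a',
              sum_fun_det (fun y v => r v y) (fun y => hrsum y) x' x]
      _ = _ := by
          rw [Finset.sum_mul_sum]
          exact Finset.sum_congr rfl fun f _ => Finset.sum_congr rfl fun g _ => by ring
end
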